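/- arXiv:math-ph/0408050 — 2 statements merged into one kernel-verified Lean document; each statement's English description precedes it below -/
import Mathlib

section
/- For any test function f ∈ 𝒮(ℝ), the limits lim_{ε→0⁺} ∫_ℝ f(κ)/(κ + iε) dκ and lim_{ε→0⁺} ∫_ℝ f(κ)/(κ - iε) dκ exist and their difference equals -2πi·f(0). -/
open MeasureTheory Set Filter

/-! Auxiliary development for the Sokhotski–Plemelj formula. -/

private lemma sp_abs_log_le {x : ℝ} (hx : 0 < x) (hx1 : x ≤ 1) :
    |Real.log x| ≤ 2 * x ^ (-(1/2) : ℝ) := by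
  have hy : 0 < x ^ (-(1/2) : ℝ) := Real.rpow_pos_of_pos hx _
  have hlog : Real.log (x ^ (-(1/2) : ℝ)) = (-(1/2)) * Real.log x := Real.log_rpow hx _
  have h1 : (-(1/2)) * Real.log x ≤ x ^ (-(1/2) : ℝ) - 1 := hlog ▸ Real.log_le_sub_one_of_pos hy
  have h2 : Real.log x ≤ 0 := Real.log_nonpos hx.le hx1
  rw [abs_of_nonpos h2]
  linarith

private lemma sp_int_log_Ioc :
    IntegrableOn (fun x : ℝ => |Real.log x|) (Ioc 0 1) volume := by
  have h : IntegrableOn (fun x : ℝ => 2 * x ^ (-(1/2) : ℝ)) (Ioc 0 1) volume :=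
    ((intervalIntegral.intervalIntegrable_rpow' (by norm_num)).1).const_mul 2
  refine h.mono' (Real.measurable_log.abs.aestronglyMeasurable) ?_
  filter_upwards [ae_restrict_mem measurableSet_Ioc] with x hx
  rw [Real.norm_eq_abs, _root_.abs_abs]
  exact sp_abs_log_le hx.1 hx.2

private lemma sp_int_logabs :
    IntegrableOn (fun x : ℝ => |Real.log (|x|)|) (Ioc (-1) 1) volume := by
  have h1 : IntegrableOn (fun x : ℝ => |Real.log (|x|)|) (Ioc 0 1) volume := by
    refine sp_int_log_Ioc.congr_fun (fun x hx => ?_) measurableSet_Ioc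
    rw [abs_of_pos hx.1]
  have h2 : IntegrableOn (fun x : ℝ => |Real.log (|x|)|) (Ioc (-1) 0) volume := by
    have h3 := ((Measure.measurePreserving_neg (volume : Measure ℝ)).integrableOn_comp_preimage
        (Homeomorph.neg ℝ).measurableEmbedding).2 h1
    have h4 : IntegrableOn (fun x : ℝ => |Real.log (|x|)|) (Ico (-1) 0) volume := by
      simpa [Function.comp_def, neg_preimage, neg_Ioc, neg_zero, abs_neg] using h3
    exact (h4.mono_set Ioo_subset_Ico_self).congr_set_ae MeasureTheory.Ioo_ae_eq_Ioc.symm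
  have : Ioc (-1 : ℝ) 1 = Ioc (-1) 0 ∪ Ioc 0 1 := (Ioc_union_Ioc_eq_Ioc (by norm_num) (by norm_num)).symm
  rw [this, integrableOn_union]
  exact ⟨h2, h1⟩

/-- The dominating function. -/
private noncomputable def spD (g : SchwartzMap ℝ ℂ) (κ : ℝ) : ℝ :=
  ‖g κ‖ * (Real.pi + Real.log (|κ| + 1) + |Real.log (|κ|)|)

private lemma sp_cont_log1p : Continuous fun κ : ℝ => Real.log (|κ| + 1) := by
  rw [continuous_iff_continuousAt]
  intro x
  exact (Real.continuousAt_log (by positivity)).comp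
    ((_root_.continuous_abs.add continuous_const).continuousAt (x := x))

private lemma sp_dom_integrable (g : SchwartzMap ℝ ℂ) : Integrable (spD g) volume := by
  have e : spD g = fun κ => ‖g κ‖ * Real.pi + ‖g κ‖ * Real.log (|κ| + 1)
      + ‖g κ‖ * |Real.log (|κ|)| := by
    funext κ; simp only [spD]; ring
  rw [e]
  have h1 : Integrable (fun κ : ℝ => ‖g κ‖ * Real.pi) volume :=
    (g.integrable (μ := volume)).norm.mul_const _
  have hpow := g.integrable_pow_mul (volume : Measure ℝ) 1
  have h2 : Integrable (fun κ : ℝ => ‖g κ‖ * Real.log (|κ| + 1)) volume := by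
    refine hpow.mono' ((g.continuous.norm.mul sp_cont_log1p).aestronglyMeasurable) ?_
    filter_upwards with κ
    have hl0 : 0 ≤ Real.log (|κ| + 1) := Real.log_nonneg (by linarith [abs_nonneg κ])
    have hl : Real.log (|κ| + 1) ≤ |κ| := by
      have := Real.log_le_sub_one_of_pos (x := |κ| + 1) (by positivity)
      linarith
    rw [Real.norm_eq_abs, abs_of_nonneg (by positivity)]
    calc ‖g κ‖ * Real.log (|κ| + 1) ≤ ‖g κ‖ * |κ| :=
          mul_le_mul_of_nonneg_left hl (norm_nonneg _)
      _ = ‖κ‖ ^ 1 * ‖g κ‖ := by rw [pow_one, Real.norm_eq_abs]; ring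
  have h3 : Integrable (fun κ : ℝ => ‖g κ‖ * |Real.log (|κ|)|) volume := by
    obtain ⟨C, hC0, hC⟩ := g.decay 0 0
    have hCb : ∀ x, ‖g x‖ ≤ C := by
      intro x
      have := hC x
      simpa [norm_iteratedFDeriv_zero] using this
    have hmeas : AEStronglyMeasurable (fun κ : ℝ => ‖g κ‖ * |Real.log (|κ|)|) volume :=
      (g.continuous.norm.measurable.mul
        ((Real.measurable_log.comp measurable_abs).abs)).aestronglyMeasurable
    rw [← integrableOn_univ,
      show (univ : Set ℝ) = Ioc (-1 : ℝ) 1 ∪ (Ioc (-1 : ℝ) 1)ᶜ from (union_compl_self _).symm,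
      integrableOn_union]
    constructor
    · refine (sp_int_logabs.const_mul C).mono' hmeas.restrict ?_
      filter_upwards [ae_restrict_mem measurableSet_Ioc] with x _
      rw [Real.norm_eq_abs, abs_of_nonneg (by positivity)]
      exact mul_le_mul_of_nonneg_right (hCb x) (abs_nonneg _)
    · refine (hpow.integrableOn).mono' hmeas.restrict ?_
      filter_upwards [ae_restrict_mem measurableSet_Ioc.compl] with x hx
      have hx1 : 1 ≤ |x| := by
        rw [mem_compl_iff, mem_Ioc, not_and_or] at hx
        rw [le_abs]
        rcases hx with hx | hx
        · right; linarith [not_lt.1 hx]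
        · left; linarith [not_le.1 hx]
      have hlog : |Real.log (|x|)| ≤ |x| := by
        rw [abs_of_nonneg (Real.log_nonneg hx1)]
        have := Real.log_le_sub_one_of_pos (x := |x|) (by linarith)
        linarith
      rw [Real.norm_eq_abs, abs_of_nonneg (by positivity)]
      calc ‖g x‖ * |Real.log (|x|)| ≤ ‖g x‖ * |x| :=
            mul_le_mul_of_nonneg_left hlog (norm_nonneg _)
        _ = ‖x‖ ^ 1 * ‖g x‖ := by rw [pow_one, Real.norm_eq_abs]; ring
  exact (h1.add h2).add h3

private lemma sp_log_bound {κ ε : ℝ} (hκ : κ ≠ 0) (hε1 : |ε| ≤ 1) :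
    ‖Complex.log ((κ : ℂ) + ε * Complex.I)‖ ≤ Real.pi + Real.log (|κ| + 1) + |Real.log (|κ|)| := by
  set z : ℂ := (κ : ℂ) + ε * Complex.I with hz
  have hre : z.re = κ := by simp [hz]
  have him : z.im = ε := by simp [hz]
  have habs_lb : |κ| ≤ ‖z‖ := hre ▸ Complex.abs_re_le_norm z
  have habs_ub : ‖z‖ ≤ |κ| + 1 := by
    calc ‖z‖ ≤ |z.re| + |z.im| := Complex.norm_le_abs_re_add_abs_im z
      _ = |κ| + |ε| := by rw [hre, him]
      _ ≤ |κ| + 1 := by linarith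
  have hκpos : 0 < |κ| := abs_pos.2 hκ
  have hlog_bound : |Real.log (‖z‖)| ≤ Real.log (|κ| + 1) + |Real.log (|κ|)| := by
    rw [abs_le]
    constructor
    · have h1 : Real.log |κ| ≤ Real.log (‖z‖) :=
        Real.log_le_log hκpos habs_lb
      have h2 : -|Real.log (|κ|)| ≤ Real.log |κ| := neg_abs_le _
      have h3 : 0 ≤ Real.log (|κ| + 1) := Real.log_nonneg (by linarith)
      linarith
    · have h1 : Real.log (‖z‖) ≤ Real.log (|κ| + 1) :=
        Real.log_le_log (lt_of_lt_of_le hκpos habs_lb) habs_ub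
      have h2 : 0 ≤ |Real.log (|κ|)| := abs_nonneg _
      linarith
  calc ‖Complex.log z‖ ≤ |(Complex.log z).re| + |(Complex.log z).im| :=
        Complex.norm_le_abs_re_add_abs_im _
    _ = |Real.log (‖z‖)| + |z.arg| := by rw [Complex.log_re, Complex.log_im]
    _ ≤ (Real.log (|κ| + 1) + |Real.log (|κ|)|) + Real.pi :=
        add_le_add hlog_bound (Complex.abs_arg_le_pi z)
    _ = Real.pi + Real.log (|κ| + 1) + |Real.log (|κ|)| := by ring

private lemma sp_ne_zero {ε : ℝ} (hε : ε ≠ 0) (κ : ℝ) : (κ : ℂ) + ε * Complex.I ≠ 0 := by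
  intro h
  have : ((κ : ℂ) + ε * Complex.I).im = 0 := by rw [h]; simp
  simp at this
  exact hε this

private lemma sp_mem_slitPlane {ε : ℝ} (hε : ε ≠ 0) (κ : ℝ) :
    (κ : ℂ) + ε * Complex.I ∈ Complex.slitPlane := by
  rw [Complex.mem_slitPlane_iff]
  right
  simpa using hε

private lemma sp_cont_log {ε : ℝ} (hε : ε ≠ 0) :
    Continuous fun κ : ℝ => Complex.log ((κ : ℂ) + ε * Complex.I) := by
  have hcont : Continuous fun κ : ℝ => (κ : ℂ) + ε * Complex.I :=
    Complex.continuous_ofReal.add continuous_const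
  exact hcont.clog (sp_mem_slitPlane hε)

private lemma sp_ae_ne_zero : ∀ᵐ κ : ℝ ∂volume, κ ≠ 0 := by
  rw [ae_iff]
  simpa using measure_singleton (0 : ℝ)

private lemma sp_int_mul_log (g : SchwartzMap ℝ ℂ) {ε : ℝ} (hε : ε ≠ 0) (hε1 : |ε| ≤ 1) :
    Integrable (fun κ : ℝ => g κ * Complex.log ((κ : ℂ) + ε * Complex.I)) volume := by
  refine (sp_dom_integrable g).mono'
    ((g.continuous.mul (sp_cont_log hε)).aestronglyMeasurable) ?_
  filter_upwards [sp_ae_ne_zero] with κ hκ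
  rw [norm_mul]
  exact mul_le_mul_of_nonneg_left (sp_log_bound hκ hε1) (norm_nonneg _)

private lemma sp_ibp (f : SchwartzMap ℝ ℂ) {ε : ℝ} (hε : ε ≠ 0) (hε1 : |ε| ≤ 1) :
    ∫ κ : ℝ, f κ / ((κ : ℂ) + ε * Complex.I)
      = - ∫ κ : ℝ, deriv f κ * Complex.log ((κ : ℂ) + ε * Complex.I) := by
  have hu : ∀ x : ℝ, HasDerivAt f (deriv f x) x :=
    fun x => (f.differentiable.differentiableAt).hasDerivAt
  have hv : ∀ x : ℝ, HasDerivAt (fun κ : ℝ => Complex.log ((κ : ℂ) + ε * Complex.I))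
      (((x : ℂ) + ε * Complex.I)⁻¹) x := by
    intro x
    have h1 : HasDerivAt (fun κ : ℝ => (κ : ℂ) + ε * Complex.I) 1 x := by
      simpa using (Complex.ofRealCLM.hasDerivAt (x := x)).add_const ((ε : ℂ) * Complex.I)
    have h2 := (Complex.hasDerivAt_log (sp_mem_slitPlane hε x)).comp x h1
    simpa [Function.comp_def] using h2
  have huv' : Integrable ((fun x => f x) * fun κ : ℝ => (((κ : ℂ) + ε * Complex.I)⁻¹)) volume := by
    have : Continuous fun κ : ℝ => (((κ : ℂ) + ε * Complex.I)⁻¹) :=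
      (Complex.continuous_ofReal.add continuous_const).inv₀ (fun κ => sp_ne_zero hε κ)
    refine ((f.integrable (μ := volume)).norm.mul_const (|ε|⁻¹)).mono'
      ((f.continuous.mul this).aestronglyMeasurable) ?_
    filter_upwards with κ
    rw [Pi.mul_apply, norm_mul]
    refine mul_le_mul_of_nonneg_left ?_ (norm_nonneg _)
    rw [norm_inv]
    refine inv_anti₀ (abs_pos.2 hε) ?_
    have : |((κ : ℂ) + ε * Complex.I).im| ≤ ‖(κ : ℂ) + ε * Complex.I‖ :=
      Complex.abs_im_le_norm _
    simpa using this
  have hu'v : Integrable ((fun x => deriv f x) *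
      fun κ : ℝ => Complex.log ((κ : ℂ) + ε * Complex.I)) volume := by
    have h := sp_int_mul_log (SchwartzMap.derivCLM ℝ ℂ f) hε hε1
    simpa [SchwartzMap.derivCLM_apply, Pi.mul_def] using h
  have huv : Integrable ((fun x => f x) *
      fun κ : ℝ => Complex.log ((κ : ℂ) + ε * Complex.I)) volume := by
    have h := sp_int_mul_log f hε hε1
    simpa [Pi.mul_def] using h
  have key2 := MeasureTheory.integral_mul_deriv_eq_deriv_mul_of_integrable (fun x _ => hu x) (fun x _ => hv x) huv' hu'v huv
  simp only [div_eq_mul_inv]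
  exact key2

/-! Limit functions -/

private noncomputable def spP (κ : ℝ) : ℝ := Set.indicator (Iio (0:ℝ)) (fun _ => Real.pi) κ

private noncomputable def spLp (κ : ℝ) : ℂ :=
  (Real.log |κ| : ℂ) + (spP κ : ℂ) * Complex.I

private noncomputable def spLm (κ : ℝ) : ℂ :=
  (Real.log |κ| : ℂ) - (spP κ : ℂ) * Complex.I

private lemma sp_abs_spP (κ : ℝ) : |spP κ| ≤ Real.pi := by
  unfold spP
  by_cases h : κ ∈ Iio (0:ℝ)
  · rw [Set.indicator_of_mem h, abs_of_nonneg Real.pi_pos.le]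
  · rw [Set.indicator_of_notMem h, abs_zero]; exact Real.pi_pos.le

private lemma sp_norm_ofReal_mul_I (x : ℝ) : ‖(x : ℂ) * Complex.I‖ = |x| := by
  rw [norm_mul, Complex.norm_I, mul_one, Complex.norm_real, Real.norm_eq_abs]

private lemma sp_norm_Lp (κ : ℝ) :
    ‖spLp κ‖ ≤ Real.pi + Real.log (|κ| + 1) + |Real.log (|κ|)| := by
  have hlog0 : 0 ≤ Real.log (|κ| + 1) := Real.log_nonneg (by linarith [abs_nonneg κ])
  calc ‖spLp κ‖ ≤ ‖((Real.log |κ| : ℝ) : ℂ)‖ + ‖((spP κ : ℝ) : ℂ) * Complex.I‖ := norm_add_le _ _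
    _ = |Real.log (|κ|)| + |spP κ| := by
        rw [sp_norm_ofReal_mul_I, Complex.norm_real, Real.norm_eq_abs]
    _ ≤ Real.pi + Real.log (|κ| + 1) + |Real.log (|κ|)| := by
        have := sp_abs_spP κ; linarith

private lemma sp_norm_Lm (κ : ℝ) :
    ‖spLm κ‖ ≤ Real.pi + Real.log (|κ| + 1) + |Real.log (|κ|)| := by
  have hlog0 : 0 ≤ Real.log (|κ| + 1) := Real.log_nonneg (by linarith [abs_nonneg κ])
  calc ‖spLm κ‖ ≤ ‖((Real.log |κ| : ℝ) : ℂ)‖ + ‖((spP κ : ℝ) : ℂ) * Complex.I‖ := norm_sub_le _ _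
    _ = |Real.log (|κ|)| + |spP κ| := by
        rw [sp_norm_ofReal_mul_I, Complex.norm_real, Real.norm_eq_abs]
    _ ≤ Real.pi + Real.log (|κ| + 1) + |Real.log (|κ|)| := by
        have := sp_abs_spP κ; linarith

private lemma sp_measurable_spP : Measurable spP :=
  Measurable.indicator measurable_const measurableSet_Iio

private lemma sp_int_Lp (g : SchwartzMap ℝ ℂ) :
    Integrable (fun κ : ℝ => g κ * spLp κ) volume := by
  have hm : Measurable spLp := by
    unfold spLp
    exact (Complex.measurable_ofReal.comp (Real.measurable_log.comp measurable_abs)).add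
      ((Complex.measurable_ofReal.comp sp_measurable_spP).mul measurable_const)
  refine (sp_dom_integrable g).mono'
    ((g.continuous.measurable.mul hm).aestronglyMeasurable) ?_
  filter_upwards with κ
  rw [norm_mul]
  exact mul_le_mul_of_nonneg_left (sp_norm_Lp κ) (norm_nonneg _)

private lemma sp_int_Lm (g : SchwartzMap ℝ ℂ) :
    Integrable (fun κ : ℝ => g κ * spLm κ) volume := by
  have hm : Measurable spLm := by
    unfold spLm
    exact (Complex.measurable_ofReal.comp (Real.measurable_log.comp measurable_abs)).sub
      ((Complex.measurable_ofReal.comp sp_measurable_spP).mul measurable_const)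
  refine (sp_dom_integrable g).mono'
    ((g.continuous.measurable.mul hm).aestronglyMeasurable) ?_
  filter_upwards with κ
  rw [norm_mul]
  exact mul_le_mul_of_nonneg_left (sp_norm_Lm κ) (norm_nonneg _)

private lemma sp_tendsto_z {κ : ℝ} :
    Tendsto (fun ε : ℝ => (κ : ℂ) + ε * Complex.I) (nhds 0) (nhds ((κ : ℂ))) := by
  have hc : Continuous fun ε : ℝ => (κ : ℂ) + ε * Complex.I :=
    continuous_const.add (Complex.continuous_ofReal.mul continuous_const)
  have := hc.tendsto 0
  simpa using this

private lemma sp_tendsto_abs {κ : ℝ} :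
    Tendsto (fun ε : ℝ => ‖(κ : ℂ) + ε * Complex.I‖) (nhds 0) (nhds (|κ|)) := by
  have := (continuous_norm.tendsto ((κ : ℂ))).comp sp_tendsto_z
  simpa [Function.comp_def, Complex.norm_real] using this

private lemma sp_tendsto_relog {κ : ℝ} (hκ : κ ≠ 0) :
    Tendsto (fun ε : ℝ => Real.log (‖(κ : ℂ) + ε * Complex.I‖)) (nhds 0)
      (nhds (Real.log (|κ|))) :=
  ((Real.continuousAt_log (abs_ne_zero.2 hκ)).tendsto).comp sp_tendsto_abs

private lemma sp_tendsto_arg_plus {κ : ℝ} (hκ : κ ≠ 0) :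
    Tendsto (fun ε : ℝ => Complex.arg ((κ : ℂ) + ε * Complex.I)) (nhdsWithin 0 (Ioi 0))
      (nhds (spP κ)) := by
  rcases lt_or_gt_of_ne hκ with hneg | hpos
  · have hPeq : spP κ = Real.pi := by rw [spP, Set.indicator_of_mem (mem_Iio.2 hneg)]
    rw [hPeq]
    have harcsin : Tendsto (fun ε : ℝ =>
        Real.arcsin ((-((κ : ℂ) + ε * Complex.I)).im / ‖(κ : ℂ) + ε * Complex.I‖))
        (nhds 0) (nhds 0) := by
      have hnum : Tendsto (fun ε : ℝ => (-((κ : ℂ) + ε * Complex.I)).im) (nhds 0) (nhds 0) := by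
        have he : (fun ε : ℝ => (-((κ : ℂ) + ε * Complex.I)).im) = fun ε : ℝ => -ε := by
          funext ε; simp
        rw [he]
        simpa using (continuous_neg (G := ℝ)).tendsto 0
      have hdiv := hnum.div sp_tendsto_abs (abs_ne_zero.2 hκ)
      rw [zero_div] at hdiv
      have := (Real.continuous_arcsin.tendsto 0).comp hdiv
      simpa [Real.arcsin_zero, Function.comp_def, Pi.div_apply] using this
    have hmain : Tendsto (fun ε : ℝ =>
        Real.arcsin ((-((κ : ℂ) + ε * Complex.I)).im / ‖(κ : ℂ) + ε * Complex.I‖)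
          + Real.pi) (nhds 0) (nhds (Real.pi)) := by
      simpa using harcsin.add_const Real.pi
    refine (hmain.mono_left (nhdsWithin_le_nhds (s := Ioi 0))).congr' ?_
    filter_upwards [self_mem_nhdsWithin] with ε (hε : ε ∈ Ioi (0:ℝ))
    refine (Complex.arg_of_re_neg_of_im_nonneg ?_ ?_).symm
    · simpa using hneg
    · simpa using (le_of_lt hε)
  · have hPeq : spP κ = 0 := by
      rw [spP, Set.indicator_of_notMem (by simp [mem_Iio, not_lt.2 hpos.le])]
    rw [hPeq]
    have hca : ContinuousAt Complex.arg ((κ : ℂ)) :=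
      Complex.continuousAt_arg (by rw [Complex.mem_slitPlane_iff]; left; simpa using hpos)
    have := (hca.tendsto.comp sp_tendsto_z).mono_left (nhdsWithin_le_nhds (s := Ioi 0))
    simpa [Function.comp_def, Complex.arg_ofReal_of_nonneg hpos.le] using this

private lemma sp_log_decomp (z : ℂ) :
    Complex.log z = (Real.log (‖z‖) : ℂ) + (Complex.arg z : ℂ) * Complex.I := by
  rw [← Complex.re_add_im (Complex.log z), Complex.log_re, Complex.log_im]

private lemma sp_tendsto_log_plus {κ : ℝ} (hκ : κ ≠ 0) :
    Tendsto (fun ε : ℝ => Complex.log ((κ : ℂ) + ε * Complex.I)) (nhdsWithin 0 (Ioi 0))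
      (nhds (spLp κ)) := by
  have h1 := (Complex.continuous_ofReal.tendsto _).comp
    ((sp_tendsto_relog hκ).mono_left (nhdsWithin_le_nhds (s := Ioi 0)))
  have h2 := ((Complex.continuous_ofReal.tendsto _).comp (sp_tendsto_arg_plus hκ)).mul
    (tendsto_const_nhds (x := Complex.I))
  have h3 := h1.add h2
  refine h3.congr ?_
  intro ε
  exact (sp_log_decomp _).symm

private lemma sp_tendsto_zm {κ : ℝ} :
    Tendsto (fun ε : ℝ => (κ : ℂ) - ε * Complex.I) (nhds 0) (nhds ((κ : ℂ))) := by
  have hc : Continuous fun ε : ℝ => (κ : ℂ) - ε * Complex.I :=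
    continuous_const.sub (Complex.continuous_ofReal.mul continuous_const)
  have := hc.tendsto 0
  simpa using this

private lemma sp_tendsto_absm {κ : ℝ} :
    Tendsto (fun ε : ℝ => ‖(κ : ℂ) - ε * Complex.I‖) (nhds 0) (nhds (|κ|)) := by
  have := (continuous_norm.tendsto ((κ : ℂ))).comp sp_tendsto_zm
  simpa [Function.comp_def, Complex.norm_real] using this

private lemma sp_tendsto_arg_minus {κ : ℝ} (hκ : κ ≠ 0) :
    Tendsto (fun ε : ℝ => Complex.arg ((κ : ℂ) - ε * Complex.I)) (nhdsWithin 0 (Ioi 0))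
      (nhds (-spP κ)) := by
  rcases lt_or_gt_of_ne hκ with hneg | hpos
  · have hPeq : spP κ = Real.pi := by rw [spP, Set.indicator_of_mem (mem_Iio.2 hneg)]
    rw [hPeq]
    have harcsin : Tendsto (fun ε : ℝ =>
        Real.arcsin ((-((κ : ℂ) - ε * Complex.I)).im / ‖(κ : ℂ) - ε * Complex.I‖))
        (nhds 0) (nhds 0) := by
      have hnum : Tendsto (fun ε : ℝ => (-((κ : ℂ) - ε * Complex.I)).im) (nhds 0) (nhds 0) := by
        have he : (fun ε : ℝ => (-((κ : ℂ) - ε * Complex.I)).im) = fun ε : ℝ => ε := by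
          funext ε; simp
        rw [he]
        exact tendsto_id
      have hdiv := hnum.div sp_tendsto_absm (abs_ne_zero.2 hκ)
      rw [zero_div] at hdiv
      have := (Real.continuous_arcsin.tendsto 0).comp hdiv
      simpa [Real.arcsin_zero, Function.comp_def, Pi.div_apply] using this
    have hmain : Tendsto (fun ε : ℝ =>
        Real.arcsin ((-((κ : ℂ) - ε * Complex.I)).im / ‖(κ : ℂ) - ε * Complex.I‖)
          - Real.pi) (nhds 0) (nhds (-Real.pi)) := by
      simpa using harcsin.sub_const Real.pi
    refine (hmain.mono_left (nhdsWithin_le_nhds (s := Ioi 0))).congr' ?_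
    filter_upwards [self_mem_nhdsWithin] with ε (hε : ε ∈ Ioi (0:ℝ))
    refine (Complex.arg_of_re_neg_of_im_neg ?_ ?_).symm
    · simpa using hneg
    · simpa using hε
  · have hPeq : spP κ = 0 := by
      rw [spP, Set.indicator_of_notMem (by simp [mem_Iio, not_lt.2 hpos.le])]
    rw [hPeq, neg_zero]
    have hca : ContinuousAt Complex.arg ((κ : ℂ)) :=
      Complex.continuousAt_arg (by rw [Complex.mem_slitPlane_iff]; left; simpa using hpos)
    have := (hca.tendsto.comp sp_tendsto_zm).mono_left (nhdsWithin_le_nhds (s := Ioi 0))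
    simpa [Function.comp_def, Complex.arg_ofReal_of_nonneg hpos.le] using this

private lemma sp_tendsto_log_minus {κ : ℝ} (hκ : κ ≠ 0) :
    Tendsto (fun ε : ℝ => Complex.log ((κ : ℂ) - ε * Complex.I)) (nhdsWithin 0 (Ioi 0))
      (nhds (spLm κ)) := by
  have hrel : Tendsto (fun ε : ℝ => Real.log (‖(κ : ℂ) - ε * Complex.I‖))
      (nhds 0) (nhds (Real.log (|κ|))) :=
    ((Real.continuousAt_log (abs_ne_zero.2 hκ)).tendsto).comp sp_tendsto_absm
  have h1 := (Complex.continuous_ofReal.tendsto _).comp (hrel.mono_left (nhdsWithin_le_nhds (s := Ioi 0)))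
  have h2 := ((Complex.continuous_ofReal.tendsto _).comp (sp_tendsto_arg_minus hκ)).mul
    (tendsto_const_nhds (x := Complex.I))
  have h3 := h1.add h2
  have h4 : ((Real.log (|κ|) : ℝ) : ℂ) + ((-spP κ : ℝ) : ℂ) * Complex.I = spLm κ := by
    rw [spLm]; push_cast; ring
  rw [h4] at h3
  refine h3.congr ?_
  intro ε
  exact (sp_log_decomp _).symm

private lemma sp_mem_Ioc : Ioc (0:ℝ) 1 ∈ nhdsWithin (0:ℝ) (Ioi 0) :=
  Ioc_mem_nhdsGT_of_mem (⟨le_refl 0, zero_lt_one⟩ : (0:ℝ) ∈ Ico (0:ℝ) 1)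

private lemma sp_dct_plus (g : SchwartzMap ℝ ℂ) :
    Tendsto (fun ε : ℝ => ∫ κ : ℝ, g κ * Complex.log ((κ : ℂ) + ε * Complex.I))
      (nhdsWithin 0 (Ioi 0)) (nhds (∫ κ : ℝ, g κ * spLp κ)) := by
  refine MeasureTheory.tendsto_integral_filter_of_dominated_convergence (spD g) ?_ ?_
    (sp_dom_integrable g) ?_
  · filter_upwards [self_mem_nhdsWithin] with ε (hε : ε ∈ Ioi (0:ℝ))
    exact (g.continuous.mul (sp_cont_log (ne_of_gt hε))).aestronglyMeasurable
  · filter_upwards [sp_mem_Ioc] with ε hε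
    filter_upwards [sp_ae_ne_zero] with κ hκ
    rw [norm_mul]
    exact mul_le_mul_of_nonneg_left
      (sp_log_bound hκ (by rw [abs_of_pos hε.1]; exact hε.2)) (norm_nonneg _)
  · filter_upwards [sp_ae_ne_zero] with κ hκ
    exact (sp_tendsto_log_plus hκ).const_mul (g κ)

private lemma sp_dct_minus (g : SchwartzMap ℝ ℂ) :
    Tendsto (fun ε : ℝ => ∫ κ : ℝ, g κ * Complex.log ((κ : ℂ) - ε * Complex.I))
      (nhdsWithin 0 (Ioi 0)) (nhds (∫ κ : ℝ, g κ * spLm κ)) := by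
  refine MeasureTheory.tendsto_integral_filter_of_dominated_convergence (spD g) ?_ ?_
    (sp_dom_integrable g) ?_
  · filter_upwards [self_mem_nhdsWithin] with ε (hε : ε ∈ Ioi (0:ℝ))
    have hc := sp_cont_log (ε := -ε) (by simpa using (ne_of_gt hε))
    have he : (fun κ : ℝ => Complex.log ((κ : ℂ) + (-ε : ℝ) * Complex.I))
        = fun κ : ℝ => Complex.log ((κ : ℂ) - ε * Complex.I) := by
      funext κ; push_cast; ring_nf
    rw [he] at hc
    exact (g.continuous.mul hc).aestronglyMeasurable
  · filter_upwards [sp_mem_Ioc] with ε hε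
    filter_upwards [sp_ae_ne_zero] with κ hκ
    rw [norm_mul]
    have hb := sp_log_bound (ε := -ε) hκ (by rw [abs_neg, abs_of_pos hε.1]; exact hε.2)
    have he : (κ : ℂ) + ((-ε : ℝ) : ℂ) * Complex.I = (κ : ℂ) - ε * Complex.I := by
      push_cast; ring
    rw [he] at hb
    exact mul_le_mul_of_nonneg_left hb (norm_nonneg _)
  · filter_upwards [sp_ae_ne_zero] with κ hκ
    exact (sp_tendsto_log_minus hκ).const_mul (g κ)

private lemma sp_integral_deriv_Iio (f : SchwartzMap ℝ ℂ) :
    ∫ κ : ℝ in Iio 0, deriv f κ = f 0 := by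
  have hbot : Tendsto f atBot (nhds (0 : ℂ)) := by
    have h := (zero_at_infty f : Tendsto f (cocompact ℝ) (nhds 0))
    refine h.mono_left ?_
    rw [cocompact_eq_atBot_atTop]
    exact le_sup_left
  have hres : IntegrableOn (fun κ : ℝ => deriv f κ) (Iic 0) volume := by
    have := (SchwartzMap.derivCLM ℝ ℂ f).integrable (μ := volume)
    have he : (fun κ : ℝ => deriv f κ) = fun κ : ℝ => (SchwartzMap.derivCLM ℝ ℂ f) κ := by
      funext κ; rw [SchwartzMap.derivCLM_apply]
    rw [he]
    exact this.integrableOn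
  have h1 : ∫ κ : ℝ in Iic 0, deriv f κ = f 0 - 0 :=
    MeasureTheory.integral_Iic_of_hasDerivAt_of_tendsto
      (f.continuous.continuousWithinAt)
      (fun x _ => (f.differentiable.differentiableAt).hasDerivAt)
      hres hbot
  rw [sub_zero] at h1
  rw [← h1]
  exact MeasureTheory.setIntegral_congr_set MeasureTheory.Iio_ae_eq_Iic

private theorem sp_main (f : SchwartzMap ℝ ℂ) :
    ∃ L₁ L₂ : ℂ,
      Tendsto (fun ε : ℝ => ∫ κ : ℝ, f κ / ((κ : ℂ) + ε * Complex.I))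
        (nhdsWithin 0 (Ioi 0)) (nhds L₁) ∧
      Tendsto (fun ε : ℝ => ∫ κ : ℝ, f κ / ((κ : ℂ) - ε * Complex.I))
        (nhdsWithin 0 (Ioi 0)) (nhds L₂) ∧
      L₁ - L₂ = -2 * Real.pi * Complex.I * f 0 := by
  classical
  set g : SchwartzMap ℝ ℂ := SchwartzMap.derivCLM ℝ ℂ f with hgdef
  have hgapp : ∀ x : ℝ, g x = deriv f x := fun x => SchwartzMap.derivCLM_apply ℝ f x
  refine ⟨-∫ κ : ℝ, g κ * spLp κ, -∫ κ : ℝ, g κ * spLm κ, ?_, ?_, ?_⟩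
  · refine ((sp_dct_plus g).neg).congr' ?_
    filter_upwards [sp_mem_Ioc] with ε hε
    have hibp := sp_ibp f (ne_of_gt hε.1) (by rw [abs_of_pos hε.1]; exact hε.2)
    rw [hibp]
    congr 1
  · refine ((sp_dct_minus g).neg).congr' ?_
    filter_upwards [sp_mem_Ioc] with ε hε
    have hibp := sp_ibp f (ε := -ε) (by simpa using (ne_of_gt hε.1))
      (by rw [abs_neg, abs_of_pos hε.1]; exact hε.2)
    have he : ∀ κ : ℝ, (κ : ℂ) + ((-ε : ℝ) : ℂ) * Complex.I = (κ : ℂ) - ε * Complex.I := by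
      intro κ; push_cast; ring
    simp only [he] at hibp
    rw [hibp]
    congr 1
  · have hdiff : (-∫ κ : ℝ, g κ * spLp κ) - (-∫ κ : ℝ, g κ * spLm κ)
        = -∫ κ : ℝ, (g κ * spLp κ - g κ * spLm κ) := by
      rw [MeasureTheory.integral_sub (sp_int_Lp g) (sp_int_Lm g)]
      ring
    rw [hdiff]
    have he : (fun κ : ℝ => g κ * spLp κ - g κ * spLm κ)
        = Set.indicator (Iio (0:ℝ)) (fun κ : ℝ => g κ * (2 * Real.pi * Complex.I)) := by
      funext κ
      by_cases h : κ < 0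
      · rw [Set.indicator_of_mem (mem_Iio.2 h)]
        have hP : spP κ = Real.pi := by rw [spP, Set.indicator_of_mem (mem_Iio.2 h)]
        rw [spLp, spLm, hP]
        push_cast
        ring
      · rw [Set.indicator_of_notMem (fun hh => h (mem_Iio.1 hh))]
        have hP : spP κ = 0 := by
          rw [spP, Set.indicator_of_notMem (fun hh => h (mem_Iio.1 hh))]
        rw [spLp, spLm, hP]
        push_cast
        ring
    rw [he, MeasureTheory.integral_indicator measurableSet_Iio]
    rw [MeasureTheory.integral_mul_const]
    have hI : ∫ κ : ℝ in Iio 0, g κ = f 0 := by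
      have he2 : ∀ κ : ℝ, g κ = deriv f κ := hgapp
      calc ∫ κ : ℝ in Iio 0, g κ = ∫ κ : ℝ in Iio 0, deriv f κ :=
            MeasureTheory.integral_congr_ae (Eventually.of_forall fun κ => he2 κ)
        _ = f 0 := sp_integral_deriv_Iio f
    rw [hI]
    ring

open MeasureTheory Set Filter Complex

theorem stmt_4 (f : SchwartzMap ℝ ℂ) :
    ∃ L₁ L₂ : ℂ,
      Tendsto (fun ε : ℝ => ∫ κ : ℝ, f κ / ((κ : ℂ) + ε * Complex.I))
        (nhdsWithin 0 (Ioi 0)) (nhds L₁) ∧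
      Tendsto (fun ε : ℝ => ∫ κ : ℝ, f κ / ((κ : ℂ) - ε * Complex.I))
        (nhdsWithin 0 (Ioi 0)) (nhds L₂) ∧
      L₁ - L₂ = -2 * Real.pi * Complex.I * f 0 := by
  exact sp_main f
end

section
/- Let w̃: ℝ → ℂ be continuously differentiable in a neighborhood of 0 with w̃(0) ≠ 0, and let φ: ℝ → ℝ be odd continuous with φ = id on [-1,1], 0 ≤ φ ≤ 2 on [0,∞), supp φ ⊆ [-2,2]. Define φ_n(κ) = φ(nκ)/w̃(κ) for n large enough that w̃ has no zeros on [-2/n, 2/n]. Then |lim_{ε→0⁺} ∫_ℝ φ_n(κ) w̃(κ)/(κ + iε) dκ| = |∫_ℝ φ(nκ)/κ dκ| ≥ 2 for all sufficiently large n. -/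
open MeasureTheory Set Filter Complex

theorem stmt_6 (w' : ℝ → ℂ) (U : Set ℝ) (hU : IsOpen U) (hU0 : (0:ℝ) ∈ U)
    (hw : ContDiffOn ℝ 1 w' U) (hw0 : w' 0 ≠ 0)
    (φ : ℝ → ℝ) (hodd : ∀ κ, φ (-κ) = -φ κ) (hcont : Continuous φ)
    (hid : ∀ κ ∈ Icc (-1:ℝ) 1, φ κ = κ)
    (hbd : ∀ κ : ℝ, 0 ≤ κ → 0 ≤ φ κ ∧ φ κ ≤ 2)
    (hsupp : Function.support φ ⊆ Icc (-2:ℝ) 2) :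
    ∀ᶠ n : ℕ in atTop,
      (∀ κ ∈ Icc (-(2/(n:ℝ))) (2/(n:ℝ)), w' κ ≠ 0) ∧
      ∃ L : ℂ,
        Tendsto (fun ε : ℝ =>
            ∫ κ : ℝ, ((φ (n * κ) : ℂ) / w' κ) * (w' κ / ((κ : ℂ) + ε * Complex.I)))
          (nhdsWithin 0 (Ioi 0)) (nhds L) ∧
        ‖L‖ = |∫ κ : ℝ, (if κ = 0 then (n : ℝ) else φ (n * κ) / κ)| ∧
        2 ≤ ‖L‖ := by
  -- φ 0 = 0
  have hφ0 : φ 0 = 0 := by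
    have := hodd 0; rw [neg_zero] at this; linarith
  -- φ nonneg on all of ℝ divided by κ is nonneg etc.
  -- find δ > 0 with w' ≠ 0 on Icc (-δ) δ
  have hcw : ContinuousAt w' 0 :=
    (hw.continuousOn.continuousAt (hU.mem_nhds hU0))
  have hmem : {x : ℝ | w' x ≠ 0} ∈ nhds (0:ℝ) := by
    have : w' ⁻¹' ({0}ᶜ) ∈ nhds (0:ℝ) :=
      hcw.preimage_mem_nhds (isOpen_compl_singleton.mem_nhds hw0)
    exact this
  obtain ⟨r, hr, hball⟩ := Metric.mem_nhds_iff.1 hmem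
  have hIcc : Icc (-(r/2)) (r/2) ⊆ {x : ℝ | w' x ≠ 0} := by
    intro x hx
    apply hball
    simp only [Metric.mem_ball, Real.dist_eq, sub_zero]
    rw [abs_lt]
    exact ⟨by linarith [hx.1], by linarith [hx.2]⟩
  filter_upwards [eventually_ge_atTop 1,
    (tendsto_const_div_atTop_nhds_zero_nat 2).eventually_lt_const (half_pos hr)]
    with n hn1 hn2
  have hnpos : (0:ℝ) < n := by exact_mod_cast Nat.lt_of_lt_of_le Nat.zero_lt_one hn1
  have hnne : (n:ℝ) ≠ 0 := ne_of_gt hnpos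
  have hsub : Icc (-(2/(n:ℝ))) (2/(n:ℝ)) ⊆ {x : ℝ | w' x ≠ 0} := by
    intro x hx
    apply hIcc
    exact ⟨le_trans (by linarith) hx.1, le_trans hx.2 (by linarith)⟩
  refine ⟨fun κ hκ => hsub hκ, ?_⟩
  -- the real function g
  set g : ℝ → ℝ := fun κ => if κ = 0 then (n:ℝ) else φ (n * κ) / κ with hg
  -- vanishing of φ (n κ) outside Icc (-(2/n)) (2/n)
  have hvanish : ∀ κ : ℝ, κ ∉ Icc (-(2/(n:ℝ))) (2/(n:ℝ)) → φ (n * κ) = 0 := by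
    intro κ hκ
    by_contra h
    apply hκ
    have := hsupp h
    constructor
    · rw [neg_le, le_div_iff₀ hnpos]
      nlinarith [this.1]
    · rw [le_div_iff₀ hnpos]
      nlinarith [this.2]
  -- nonnegativity of g
  have hφsign : ∀ κ : ℝ, κ ≠ 0 → 0 ≤ φ (n * κ) / κ := by
    intro κ hκ
    rcases lt_or_gt_of_ne hκ with h | h
    · rw [← neg_div_neg_eq]
      have : 0 ≤ φ (n * (-κ)) := (hbd _ (by nlinarith)).1
      rw [mul_neg, hodd] at this
      exact div_nonneg (by linarith) (by linarith)
    · exact div_nonneg (hbd _ (by positivity)).1 h.le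
  have hg0 : ∀ κ, 0 ≤ g κ := by
    intro κ
    by_cases hκ : κ = 0
    · simp [hg, hκ, hnpos.le]
    · simpa [hg, hκ] using hφsign κ hκ
  -- g = n on Icc (-(1/n)) (1/n)
  have hgval : ∀ κ ∈ Icc (-(1/(n:ℝ))) (1/(n:ℝ)), g κ = n := by
    intro κ hκ
    by_cases h : κ = 0
    · simp [hg, h]
    · have hinv : (n:ℝ) * (1/n) = 1 := by field_simp
      have h1 : n * κ ∈ Icc (-1:ℝ) 1 := by
        constructor
        · have := mul_le_mul_of_nonneg_left hκ.1 hnpos.le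
          rw [mul_neg, hinv] at this; linarith
        · have := mul_le_mul_of_nonneg_left hκ.2 hnpos.le
          rw [hinv] at this; linarith
      simp only [hg, if_neg h]
      rw [hid _ h1, mul_div_assoc, div_self h, mul_one]
  -- g bounded by 2n
  have hgle : ∀ κ, g κ ≤ 2 * n := by
    intro κ
    by_cases h : κ = 0
    · simp [hg, h]; linarith
    by_cases h1 : κ ∈ Icc (-(1/(n:ℝ))) (1/(n:ℝ))
    · rw [hgval κ h1]; linarith
    · simp only [hg, if_neg h]
      have habs : 1/(n:ℝ) < |κ| := by
        rcases abs_cases κ with ⟨he, _⟩ | ⟨he, _⟩ <;>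
          [skip; skip] <;>
          · rw [he]
            by_contra hc
            push_neg at hc
            exact h1 ⟨by linarith [abs_nonneg κ, hc], by linarith [abs_nonneg κ, hc]⟩
      have hb2 : |φ (n * κ)| ≤ 2 := by
        rcases le_or_gt 0 (n * κ) with hs | hs
        · rw [_root_.abs_of_nonneg (hbd _ hs).1]; exact (hbd _ hs).2
        · have h0 : 0 ≤ (n:ℝ) * (-κ) := by nlinarith
          have hle : φ (n * κ) ≤ 0 := by
            have := (hbd _ h0).1
            rw [mul_neg, hodd] at this; linarith
          rw [_root_.abs_of_nonpos hle, ← hodd, ← mul_neg]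
          exact (hbd _ h0).2
      calc φ (n * κ) / κ = |φ (n * κ) / κ| := (_root_.abs_of_nonneg (hφsign κ h)).symm
        _ = |φ (n * κ)| / |κ| := abs_div _ _
        _ ≤ 2 / |κ| := by gcongr
        _ ≤ 2 * n := by
            rw [div_le_iff₀ (abs_pos.2 h)]
            have hinv : (n:ℝ) * (1/n) = 1 := by field_simp
            have h2 := mul_lt_mul_of_pos_left habs hnpos
            rw [hinv] at h2
            nlinarith
  -- measurability of g
  have hgmeas : Measurable g := by
    apply Measurable.ite (measurableSet_eq) measurable_const
    exact (hcont.measurable.comp (measurable_const.mul measurable_id)).div measurable_id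
  -- integrability of g
  have hgint : Integrable g := by
    have hind : Integrable ((Icc (-(2/(n:ℝ))) (2/(n:ℝ))).indicator (fun _ => (2*(n:ℝ)))) :=
      (integrableOn_const measure_Icc_lt_top.ne).integrable_indicator measurableSet_Icc
    refine hind.mono' hgmeas.aestronglyMeasurable (ae_of_all _ fun κ => ?_)
    rw [Real.norm_eq_abs, _root_.abs_of_nonneg (hg0 κ)]
    by_cases hκ : κ ∈ Icc (-(2/(n:ℝ))) (2/(n:ℝ))
    · rw [indicator_of_mem hκ]; exact hgle κ
    · rw [indicator_of_notMem hκ]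
      have h0 : κ ≠ 0 := by
        intro h; apply hκ; rw [h]
        exact ⟨neg_nonpos.2 (by positivity), by positivity⟩
      simp only [hg, if_neg h0, hvanish κ hκ, zero_div, le_refl]
  -- the integral of g is at least 2
  have hint2 : 2 ≤ ∫ κ, g κ := by
    have h1 : ∫ κ in Icc (-(1/(n:ℝ))) (1/(n:ℝ)), g κ ≤ ∫ κ, g κ :=
      setIntegral_le_integral hgint (ae_of_all _ hg0)
    have h2 : ∫ κ in Icc (-(1/(n:ℝ))) (1/(n:ℝ)), g κ = 2 := by
      rw [setIntegral_congr_fun measurableSet_Icc hgval, setIntegral_const, measureReal_def,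
        Real.volume_Icc, smul_eq_mul]
      rw [ENNReal.toReal_ofReal (by rw [sub_neg_eq_add]; positivity)]
      field_simp
      ring
    linarith
  refine ⟨((∫ κ, g κ : ℝ) : ℂ), ?_, ?_, ?_⟩
  · -- the tendsto statement
    have heq : ∀ ε : ℝ, (fun κ : ℝ => ((φ (n * κ) : ℂ) / w' κ) * (w' κ / ((κ : ℂ) + ε * Complex.I)))
        = fun κ : ℝ => (φ (n * κ) : ℂ) / ((κ : ℂ) + ε * Complex.I) := by
      intro ε
      funext κ
      by_cases hκ : κ ∈ Icc (-(2/(n:ℝ))) (2/(n:ℝ))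
      · exact div_mul_div_cancel₀ (hsub hκ) 
      · rw [hvanish κ hκ]; simp
    have hL : Tendsto (fun ε : ℝ =>
        ∫ κ : ℝ, (φ (n * κ) : ℂ) / ((κ : ℂ) + ε * Complex.I))
        (nhdsWithin 0 (Ioi 0)) (nhds ((∫ κ, g κ : ℝ) : ℂ)) := by
      rw [show (((∫ κ, g κ : ℝ)) : ℂ) = ∫ κ, (g κ : ℂ) from integral_ofReal.symm]
      apply tendsto_integral_filter_of_dominated_convergence g
      · filter_upwards [self_mem_nhdsWithin] with ε (hε : 0 < ε)
        apply Continuous.aestronglyMeasurable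
        apply Continuous.div
        · exact Complex.continuous_ofReal.comp (hcont.comp (continuous_const.mul continuous_id))
        · exact continuous_ofReal.add continuous_const
        · intro κ h
          have := congrArg Complex.im h
          simp at this
          exact hε.ne' this
      · filter_upwards [self_mem_nhdsWithin] with ε (hε : 0 < ε)
        refine ae_of_all _ fun κ => ?_
        by_cases hκ : κ = 0
        · simp [hκ, hφ0]
          exact hg0 0
        · have hnorm : |κ| ≤ ‖(κ : ℂ) + ε * Complex.I‖ := by
            have := Complex.abs_re_le_norm ((κ : ℂ) + ε * Complex.I)
            simpa using this
          have hpos : (0:ℝ) < |κ| := abs_pos.2 hκ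
          rw [norm_div]
          calc ‖(φ (n * κ) : ℂ)‖ / ‖(κ : ℂ) + ε * Complex.I‖
              ≤ |φ (n * κ)| / |κ| := by
                rw [Complex.norm_real, Real.norm_eq_abs]
                apply div_le_div_of_nonneg_left (abs_nonneg _) hpos
                exact hnorm
            _ = |φ (n * κ) / κ| := (abs_div _ _).symm
            _ = g κ := by
                rw [_root_.abs_of_nonneg (hφsign κ hκ)]; simp [hg, hκ]
      · exact hgint
      · have hae : ∀ᵐ κ : ℝ, κ ≠ 0 := by
          refine ae_iff.2 ?_
          simp only [ne_eq, not_not, setOf_eq_eq_singleton]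
          exact Real.volume_singleton
        filter_upwards [hae] with κ hκ
        have hκC : (κ : ℂ) ≠ 0 := Complex.ofReal_ne_zero.2 hκ
        have hden : Tendsto (fun ε : ℝ => (κ : ℂ) + ε * Complex.I)
            (nhdsWithin 0 (Ioi 0)) (nhds (κ : ℂ)) := by
          have hc : Continuous (fun ε : ℝ => (κ : ℂ) + ε * Complex.I) :=
            continuous_const.add (continuous_ofReal.mul continuous_const)
          have h0 := (hc.tendsto 0).mono_left
            (nhdsWithin_le_nhds : nhdsWithin (0:ℝ) (Ioi 0) ≤ nhds 0)
          simpa using h0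
        have hdiv := Tendsto.div (tendsto_const_nhds
          (x := (φ (n * κ) : ℂ)) (f := nhdsWithin (0:ℝ) (Ioi 0))) hden hκC
        convert hdiv using 2
        · rfl
        simp only [hg, if_neg hκ]
        push_cast
        ring
    simpa only [heq] using hL
  · rw [Complex.norm_real, Real.norm_eq_abs]
  · rw [Complex.norm_real, Real.norm_eq_abs, _root_.abs_of_nonneg (by linarith)]
    exact hint2
end
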